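/- Let p be a prime and k, ℓ ≥ 1 integers. Then h_p(k) + h_p(ℓ) ≤ h_p(k + ℓ). -/

import Mathlib

/-- The sumset `Σ(S)` of a multiset `S` with elements in an abelian group:
the set of all sums of submultisets of `S` (the empty sum being `0`). -/
def sumset {A : Type*} [AddCommGroup A] [DecidableEq A] (S : Multiset A) : Finset A :=
  (S.powerset.map Multiset.sum).toFinset

/-- A multiset `S` is reduced if removing one copy of any of its elements strictly
decreases the size of its sumset. -/
def IsReducedMultiset {A : Type*} [AddCommGroup A] [DecidableEq A] (S : Multiset A) : Prop :=
  ∀ s ∈ S, (sumset (S - {s})).card < (sumset S).card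

/-- `h_p(k)`: the largest size of a reduced multiset with elements in `ℤ_p^k`. -/
noncomputable def hmax (p k : ℕ) : ℕ :=
  sSup {n : ℕ | ∃ S : Multiset (Fin k → ZMod p), IsReducedMultiset S ∧ Multiset.card S = n}

section Aux

variable {A : Type*} [AddCommGroup A] [DecidableEq A]
variable {B : Type*} [AddCommGroup B] [DecidableEq B]

open Pointwise

lemma mem_sumset {S : Multiset A} {x : A} :
    x ∈ sumset S ↔ ∃ T ≤ S, T.sum = x := by
  simp [sumset, Multiset.mem_powerset]

lemma zero_mem_sumset (S : Multiset A) : (0 : A) ∈ sumset S :=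
  mem_sumset.2 ⟨0, zero_le, rfl⟩

lemma sumset_mono {S T : Multiset A} (h : S ≤ T) : sumset S ⊆ sumset T := by
  intro x hx
  rw [mem_sumset] at hx ⊢
  obtain ⟨W, hW, rfl⟩ := hx
  exact ⟨W, hW.trans h, rfl⟩

lemma absorb {a : A} {T U : Multiset A} (h : sumset (a ::ₘ T) = sumset T) (hTU : T ≤ U) :
    sumset (a ::ₘ U) = sumset U := by
  apply Finset.Subset.antisymm _ (sumset_mono (Multiset.le_cons_self U a))
  -- translation by `a` maps `sumset T` into itself, hence onto itself
  have hmaps : ∀ y ∈ sumset T, a + y ∈ sumset T := by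
    intro y hy
    rw [← h]
    rw [mem_sumset] at hy ⊢
    obtain ⟨W, hW, rfl⟩ := hy
    exact ⟨a ::ₘ W, Multiset.cons_le_cons a hW, by simp⟩
  have himg : (sumset T).image (fun y => a + y) = sumset T := by
    apply Finset.eq_of_subset_of_card_le
    · intro z hz
      simp only [Finset.mem_image] at hz
      obtain ⟨y, hy, rfl⟩ := hz
      exact hmaps y hy
    · rw [Finset.card_image_of_injective _ (add_right_injective a)]
  have hsurj : ∀ z ∈ sumset T, ∃ y ∈ sumset T, a + y = z := by
    intro z hz
    rw [← himg] at hz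
    obtain ⟨y, hy, h⟩ := Finset.mem_image.1 hz
    exact ⟨y, hy, h⟩
  intro x hx
  rw [mem_sumset] at hx ⊢
  obtain ⟨W, hW, rfl⟩ := hx
  by_cases ha : a ∈ W
  · -- W contains a copy of a
    set W' := W.erase a with hW'def
    have hW' : W' ≤ U := by
      have := Multiset.erase_le_erase a hW
      rwa [Multiset.erase_cons_head] at this
    have hsum : W.sum = a + W'.sum := by
      conv_lhs => rw [← Multiset.cons_erase ha]
      rw [Multiset.sum_cons]
    -- split W' into the part inside T and the rest
    have hsplit : W' = W' ∩ T + (W' - T) := by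
      ext b
      simp only [Multiset.count_add, Multiset.count_inter, Multiset.count_sub]
      omega
    have hd : (W' ∩ T).sum ∈ sumset T :=
      mem_sumset.2 ⟨W' ∩ T, Multiset.inter_le_right, rfl⟩
    obtain ⟨V, hV, hVsum⟩ := mem_sumset.1 (hmaps _ hd)
    refine ⟨(W' - T) + V, ?_, ?_⟩
    · rw [Multiset.le_iff_count]
      intro b
      have h1 : W'.count b ≤ U.count b := Multiset.le_iff_count.1 hW' b
      have h2 : T.count b ≤ U.count b := Multiset.le_iff_count.1 hTU b
      have h3 : V.count b ≤ T.count b := Multiset.le_iff_count.1 hV b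
      simp only [Multiset.count_add, Multiset.count_sub]
      omega
    · rw [Multiset.sum_add, hVsum, hsum]
      conv_rhs => rw [hsplit]
      rw [Multiset.sum_add]
      abel
  · -- a ∉ W, so W ≤ U
    refine ⟨W, ?_, rfl⟩
    rw [Multiset.le_iff_count]
    intro b
    have h1 : W.count b ≤ (a ::ₘ U).count b := Multiset.le_iff_count.1 hW b
    rcases eq_or_ne b a with rfl | hba
    · simp [Multiset.count_eq_zero_of_notMem ha]
    · rwa [Multiset.count_cons_of_ne hba] at h1

lemma IsReducedMultiset.erase {S : Multiset A} (hS : IsReducedMultiset S) {a : A}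
    (ha : a ∈ S) : IsReducedMultiset (S.erase a) := by
  intro t ht
  by_contra hc
  push_neg at hc
  have hle : (S.erase a).erase t ≤ S.erase a := Multiset.erase_le t _
  rw [Multiset.sub_singleton] at hc
  have heq : sumset ((S.erase a).erase t) = sumset (S.erase a) :=
    Finset.eq_of_subset_of_card_le (sumset_mono hle) hc
  have htS : t ∈ S := Multiset.mem_of_mem_erase ht
  have hcons : t ::ₘ (S.erase a).erase t = S.erase a := Multiset.cons_erase ht
  have h1 : sumset (t ::ₘ (S.erase a).erase t) = sumset ((S.erase a).erase t) := by
    rw [hcons, heq]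
  have h2 : (S.erase a).erase t ≤ S.erase t := by
    rw [Multiset.erase_comm]
    exact Multiset.erase_le a (S.erase t)
  have h3 := absorb h1 h2
  rw [Multiset.cons_erase htS] at h3
  have := hS t htS
  rw [Multiset.sub_singleton, ← h3] at this
  exact lt_irrefl _ this

lemma IsReducedMultiset.card_lt_card_sumset {S : Multiset A} (hS : IsReducedMultiset S) :
    Multiset.card S < (sumset S).card := by
  induction S using Multiset.strongInductionOn with
  | ih S ih =>
    rcases Multiset.empty_or_exists_mem S with rfl | ⟨a, ha⟩
    · simpa using Finset.card_pos.2 ⟨0, zero_mem_sumset 0⟩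
    · have h1 : Multiset.card (S.erase a) < (sumset (S.erase a)).card :=
        ih (S.erase a) (Multiset.erase_lt.2 ha) (hS.erase ha)
      have h2 := hS a ha
      rw [Multiset.sub_singleton] at h2
      have h3 : Multiset.card (S.erase a) + 1 = Multiset.card S :=
        Multiset.card_erase_add_one ha
      omega

lemma exists_of_le_map {f : A → B} {S : Multiset A} {W : Multiset B}
    (h : W ≤ S.map f) : ∃ W0 ≤ S, W0.map f = W := by
  classical
  induction S using Multiset.induction generalizing W with
  | empty =>
    simp only [Multiset.map_zero, Multiset.le_zero] at h
    exact ⟨0, le_rfl, by simp [h]⟩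
  | cons a S ih =>
    rw [Multiset.map_cons] at h
    by_cases hfa : f a ∈ W
    · have h' : W.erase (f a) ≤ S.map f := by
        have := Multiset.erase_le_erase (f a) h
        rwa [Multiset.erase_cons_head] at this
      obtain ⟨W0, hW0, hmap⟩ := ih h'
      refine ⟨a ::ₘ W0, Multiset.cons_le_cons a hW0, ?_⟩
      rw [Multiset.map_cons, hmap, Multiset.cons_erase hfa]
    · have h' : W ≤ S.map f := by
        rw [Multiset.le_iff_count]
        intro b
        have h1 := Multiset.le_iff_count.1 h b
        rcases eq_or_ne b (f a) with rfl | hb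
        · simp [Multiset.count_eq_zero_of_notMem hfa]
        · rwa [Multiset.count_cons_of_ne hb] at h1
      obtain ⟨W0, hW0, hmap⟩ := ih h'
      exact ⟨W0, hW0.trans (Multiset.le_cons_self S a), hmap⟩

lemma sumset_map (f : A →+ B) (S : Multiset A) :
    sumset (S.map ⇑f) = (sumset S).image ⇑f := by
  ext x
  simp only [Finset.mem_image, mem_sumset]
  constructor
  · rintro ⟨W, hW, rfl⟩
    obtain ⟨W0, hW0, rfl⟩ := exists_of_le_map hW
    exact ⟨W0.sum, ⟨W0, hW0, rfl⟩, map_multiset_sum f W0⟩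
  · rintro ⟨y, ⟨W0, hW0, rfl⟩, rfl⟩
    exact ⟨W0.map ⇑f, Multiset.map_le_map hW0, (map_multiset_sum f W0).symm⟩

lemma sumset_add (U V : Multiset A) : sumset (U + V) = sumset U + sumset V := by
  ext x
  rw [mem_sumset, Finset.mem_add]
  constructor
  · rintro ⟨W, hW, rfl⟩
    have hsplit : W = W ∩ U + (W - U) := by
      ext b
      simp only [Multiset.count_add, Multiset.count_inter, Multiset.count_sub]
      omega
    refine ⟨(W ∩ U).sum, mem_sumset.2 ⟨W ∩ U, Multiset.inter_le_right, rfl⟩,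
      (W - U).sum, mem_sumset.2 ⟨W - U, tsub_le_iff_left.2 hW, rfl⟩, ?_⟩
    conv_rhs => rw [hsplit]
    rw [Multiset.sum_add]
  · rintro ⟨y, hy, z, hz, rfl⟩
    obtain ⟨Wy, hWy, rfl⟩ := mem_sumset.1 hy
    obtain ⟨Wz, hWz, rfl⟩ := mem_sumset.1 hz
    exact ⟨Wy + Wz, add_le_add hWy hWz, Multiset.sum_add _ _⟩

lemma image_inl_add_image_inr (F : Finset A) (G : Finset B) :
    F.image (fun a => ((a, 0) : A × B)) + G.image (fun b => ((0, b) : A × B)) = F ×ˢ G := by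
  ext x
  constructor
  · intro hx
    obtain ⟨y, hy, z, hz, rfl⟩ := Finset.mem_add.1 hx
    obtain ⟨a', ha', rfl⟩ := Finset.mem_image.1 hy
    obtain ⟨b', hb', rfl⟩ := Finset.mem_image.1 hz
    simp only [Finset.mem_product, Prod.fst_add, Prod.snd_add]
    simpa using ⟨ha', hb'⟩
  · intro hx
    obtain ⟨ha, hb⟩ := Finset.mem_product.1 hx
    exact Finset.mem_add.2 ⟨(x.1, 0), Finset.mem_image_of_mem _ ha, (0, x.2),
      Finset.mem_image_of_mem _ hb, by ext <;> simp⟩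

lemma inl_injective : Function.Injective (fun a => ((a, 0) : A × B)) := by
  intro x y h; simpa using congrArg Prod.fst h

lemma inr_injective : Function.Injective (fun b => ((0, b) : A × B)) := by
  intro x y h; simpa using congrArg Prod.snd h

lemma card_sumset_prod (S : Multiset A) (T : Multiset B) :
    (sumset (S.map (fun a => ((a, 0) : A × B)) + T.map (fun b => ((0, b) : A × B)))).card
      = (sumset S).card * (sumset T).card := by
  rw [sumset_add]
  have h1 : (fun a => ((a, 0) : A × B)) = ⇑(AddMonoidHom.inl A B) := rfl
  have h2 : (fun b => ((0, b) : A × B)) = ⇑(AddMonoidHom.inr A B) := rfl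
  rw [h1, h2, sumset_map, sumset_map, ← h1, ← h2, image_inl_add_image_inr,
    Finset.card_product]

lemma reduced_prod {S : Multiset A} {T : Multiset B}
    (hS : IsReducedMultiset S) (hT : IsReducedMultiset T) :
    IsReducedMultiset
      (S.map (fun a => ((a, 0) : A × B)) + T.map (fun b => ((0, b) : A × B))) := by
  intro u hu
  rw [Multiset.sub_singleton]
  rw [Multiset.mem_add] at hu
  rw [card_sumset_prod]
  have hTpos : 0 < (sumset T).card := Finset.card_pos.2 ⟨0, zero_mem_sumset T⟩
  have hSpos : 0 < (sumset S).card := Finset.card_pos.2 ⟨0, zero_mem_sumset S⟩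
  rcases hu with hu | hu
  · obtain ⟨s, hs, rfl⟩ := Multiset.mem_map.1 hu
    rw [Multiset.erase_add_left_pos _ hu, ← Multiset.map_erase _ inl_injective,
      card_sumset_prod]
    have := hS s hs
    rw [Multiset.sub_singleton] at this
    exact (Nat.mul_lt_mul_right hTpos).2 this
  · obtain ⟨t, ht, rfl⟩ := Multiset.mem_map.1 hu
    rw [Multiset.erase_add_right_pos _ hu, ← Multiset.map_erase _ inr_injective,
      card_sumset_prod]
    have := hT t ht
    rw [Multiset.sub_singleton] at this
    exact (Nat.mul_lt_mul_left hSpos).2 this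

lemma reduced_map (e : A ≃+ B) {S : Multiset A} (hS : IsReducedMultiset S) :
    IsReducedMultiset (S.map ⇑e) := by
  have hco : ⇑e = ⇑e.toAddMonoidHom := rfl
  intro b hb
  obtain ⟨s, hs, rfl⟩ := Multiset.mem_map.1 hb
  rw [Multiset.sub_singleton, ← Multiset.map_erase _ e.injective,
    hco, sumset_map, sumset_map, AddEquiv.coe_toAddMonoidHom,
    Finset.card_image_of_injective _ e.injective,
    Finset.card_image_of_injective _ e.injective]
  have := hS s hs
  rwa [Multiset.sub_singleton] at this

end Aux

/-- The additive equivalence splitting `Fin (k+l) → M` as a product. -/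
def finAppendAddEquiv (M : Type*) [AddCommGroup M] (k l : ℕ) :
    ((Fin k → M) × (Fin l → M)) ≃+ (Fin (k + l) → M) where
  toFun x := Fin.append x.1 x.2
  invFun f := (f ∘ Fin.castAdd l, f ∘ Fin.natAdd k)
  left_inv x := by
    ext i
    · simp [Fin.append_left]
    · simp [Fin.append_right]
  right_inv f := by
    funext i
    refine Fin.addCases (fun j => ?_) (fun j => ?_) i
    · simp [Fin.append_left]
    · simp [Fin.append_right]
  map_add' x y := by
    funext i
    refine Fin.addCases (fun j => ?_) (fun j => ?_) i
    · simp [Fin.append_left]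
    · simp [Fin.append_right]

/-- `h_p(k) + h_p(ℓ) ≤ h_p(k + ℓ)`. -/
theorem hmax_add_hmax_le (p k l : ℕ) (hp : p.Prime) (hk : 1 ≤ k) (hl : 1 ≤ l) :
    hmax p k + hmax p l ≤ hmax p (k + l) := by
  classical
  haveI : NeZero p := ⟨hp.ne_zero⟩
  have bdd : ∀ m : ℕ,
      BddAbove {n : ℕ | ∃ S : Multiset (Fin m → ZMod p),
        IsReducedMultiset S ∧ Multiset.card S = n} := by
    intro m
    refine ⟨Fintype.card (Fin m → ZMod p), ?_⟩
    rintro n ⟨S, hS, rfl⟩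
    exact le_of_lt (hS.card_lt_card_sumset.trans_le (Finset.card_le_univ _))
  have hne : ∀ m : ℕ, (0 : ℕ) ∈ {n : ℕ | ∃ S : Multiset (Fin m → ZMod p),
      IsReducedMultiset S ∧ Multiset.card S = n} :=
    fun m => ⟨0, fun s hs => absurd hs (Multiset.notMem_zero s), rfl⟩
  obtain ⟨S, hS, hScard⟩ := Nat.sSup_mem ⟨0, hne k⟩ (bdd k)
  obtain ⟨T, hT, hTcard⟩ := Nat.sSup_mem ⟨0, hne l⟩ (bdd l)
  set e := finAppendAddEquiv (ZMod p) k l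
  set U : Multiset (Fin (k + l) → ZMod p) :=
    (S.map (fun a => (a, 0)) + T.map (fun b => ((0 : Fin k → ZMod p), b))).map ⇑e
  have hU : IsReducedMultiset U := reduced_map e (reduced_prod hS hT)
  have hUcard : Multiset.card U = hmax p k + hmax p l := by
    simp only [U, Multiset.card_map, Multiset.card_add]
    rw [hScard, hTcard]
    rfl
  exact le_csSup (bdd (k + l)) ⟨U, hU, hUcard⟩
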